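/- arXiv:1608.01758 — 4 statements merged into one kernel-verified Lean document; each statement's English description precedes it below -/
import Mathlib

section
/- Let A be an n×n complex matrix (n ≥ 2) and let x ⊗ f denote the rank-one matrix x f*. Define Aᵖᵉʳᵖ = {B : A*B = 0}. If A has rank one, then Aᵖᵉʳᵖ is maximal: for any nonzero matrix C with Aᵖᵉʳᵖ ⊆ Cᵖᵉʳᵖ, one has Cᵖᵉʳᵖ = Aᵖᵉʳᵖ. -/
open Matrix FiniteDimensional

/-- For an `n × n` complex matrix `A`, the set `Aᵖᵉʳᵖ = {B : Aᴴ * B = 0}`. -/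
def matPerp {n : ℕ} (A : Matrix (Fin n) (Fin n) ℂ) : Set (Matrix (Fin n) (Fin n) ℂ) :=
  {B | A.conjTranspose * B = 0}

lemma mem_matPerp_iff {n : ℕ} (A B : Matrix (Fin n) (Fin n) ℂ) :
    B ∈ matPerp A ↔ ∀ j, (fun i => B i j) ∈ LinearMap.ker A.conjTranspose.mulVecLin := by
  constructor
  · intro h j
    rw [LinearMap.mem_ker, Matrix.mulVecLin_apply]
    funext i
    simpa [Matrix.mul_apply, Matrix.mulVec, dotProduct] using congrFun (congrFun h i) j
  · intro h
    ext i j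
    have h2 := h j
    rw [LinearMap.mem_ker, Matrix.mulVecLin_apply] at h2
    simpa [Matrix.mul_apply, Matrix.mulVec, dotProduct] using congrFun h2 i

theorem stmt_5 {n : ℕ} (hn : 2 ≤ n) (A : Matrix (Fin n) (Fin n) ℂ)
    (hA : A.rank = 1) :
    ∀ C : Matrix (Fin n) (Fin n) ℂ, C ≠ 0 → matPerp A ⊆ matPerp C →
      matPerp C = matPerp A := by
  intro C hC hsub
  -- kernel inclusion
  have hker : LinearMap.ker A.conjTranspose.mulVecLin ≤ LinearMap.ker C.conjTranspose.mulVecLin := by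
    intro v hv
    have hB : (Matrix.of fun i (_ : Fin n) => v i) ∈ matPerp A := by
      rw [mem_matPerp_iff]
      intro j
      simpa using hv
    have := (mem_matPerp_iff C _).mp (hsub hB) ⟨0, by omega⟩
    simpa using this
  -- rank of Cᴴ is positive
  have hCrank : 1 ≤ C.conjTranspose.rank := by
    rcases Nat.eq_zero_or_pos C.conjTranspose.rank with h0 | h1
    · exfalso
      apply hC
      have hbot : LinearMap.range C.conjTranspose.mulVecLin = ⊥ :=
        Submodule.finrank_eq_zero.mp h0
      have hzero : C.conjTranspose.mulVecLin = 0 := LinearMap.range_eq_bot.mp hbot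
      ext i j
      have h3 : C.conjTranspose.mulVec (Pi.single i 1) = 0 := by
        rw [← Matrix.mulVecLin_apply, hzero]; rfl
      have h4 := congrFun h3 j
      rw [Matrix.mulVec_single] at h4
      simp only [Matrix.conjTranspose_apply, mul_one, Pi.zero_apply] at h4
      simpa using congrArg star h4
    · exact h1
  -- rank-nullity
  have hrnA := LinearMap.finrank_range_add_finrank_ker A.conjTranspose.mulVecLin
  have hrnC := LinearMap.finrank_range_add_finrank_ker C.conjTranspose.mulVecLin
  rw [Module.finrank_pi] at hrnA hrnC
  have hAr : A.conjTranspose.rank = 1 := by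
    open scoped ComplexOrder in rw [Matrix.rank_conjTranspose, hA]
  have hdimA : Module.finrank ℂ (LinearMap.ker A.conjTranspose.mulVecLin) = n - 1 := by
    have : A.conjTranspose.rank = Module.finrank ℂ (LinearMap.range A.conjTranspose.mulVecLin) := rfl
    rw [hAr] at this
    simp only [Fintype.card_fin] at hrnA
    omega
  have hdimC : Module.finrank ℂ (LinearMap.ker C.conjTranspose.mulVecLin) ≤ n - 1 := by
    have : C.conjTranspose.rank = Module.finrank ℂ (LinearMap.range C.conjTranspose.mulVecLin) := rfl
    simp only [Fintype.card_fin] at hrnC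
    omega
  have hkereq : LinearMap.ker A.conjTranspose.mulVecLin = LinearMap.ker C.conjTranspose.mulVecLin :=
    Submodule.eq_of_le_of_finrank_le hker (by omega)
  ext B
  show B ∈ matPerp C ↔ B ∈ matPerp A
  rw [mem_matPerp_iff, mem_matPerp_iff, hkereq]
end

section
/- Let A be an n×n complex matrix of rank at least 2. Then the set Aᵖᵉʳᵖ = {B : A*B = 0} is not maximal: there exists a rank-one matrix C with Aᵖᵉʳᵖ ⊆ Cᵖᵉʳᵖ and Cᵖᵉʳᵖ ≠ Aᵖᵉʳᵖ. -/
open Matrix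
open scoped ComplexOrder

/-- membership of the "constant columns" matrix in a perp is equivalent to kernel membership. -/
lemma constCol_mem_perp {n : ℕ} (hn : 0 < n) (M : Matrix (Fin n) (Fin n) ℂ)
    (w : Fin n → ℂ) :
    (Matrix.of fun i (_ : Fin n) => w i) ∈ matPerp M ↔ Mᴴ.mulVec w = 0 := by
  show Mᴴ * _ = 0 ↔ _
  constructor
  · intro h
    funext i
    have := congrFun (congrFun h i) ⟨0, hn⟩
    simpa [Matrix.mul_apply, Matrix.mulVec, dotProduct] using this
  · intro h
    funext i k
    have := congrFun h i
    simpa [Matrix.mul_apply, Matrix.mulVec, dotProduct] using this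

theorem stmt_6 {n : ℕ} (A : Matrix (Fin n) (Fin n) ℂ) (hA : 2 ≤ A.rank) :
    ∃ C : Matrix (Fin n) (Fin n) ℂ, C.rank = 1 ∧ matPerp A ⊆ matPerp C ∧
      matPerp C ≠ matPerp A := by
  have hn2 : 2 ≤ n := le_trans hA (A.rank_le_width)
  have hn : 0 < n := by omega
  -- A has a nonzero entry
  have hA0 : A ≠ 0 := by
    rintro rfl
    simp [Matrix.rank_zero] at hA
  obtain ⟨i0, j0, hij⟩ : ∃ i j, A i j ≠ 0 := by
    by_contra h
    push_neg at h
    exact hA0 (by ext i j; simp [h i j])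
  set v : Fin n → ℂ := fun i => A i j0 with hv
  have hvne : v ≠ 0 := by
    intro h
    exact hij (by simpa [hv] using congrFun h i0)
  set C : Matrix (Fin n) (Fin n) ℂ := Matrix.of fun i _ => v i with hC
  have hrankC : C.rank = 1 := by
    have hrange : LinearMap.range C.mulVecLin = Submodule.span ℂ {v} := by
      apply le_antisymm
      · rintro x ⟨w, rfl⟩
        have : C.mulVecLin w = (∑ k, w k) • v := by
          funext i
          simp [hC, Matrix.mulVecLin_apply, Matrix.mulVec, dotProduct,
            Finset.sum_mul, Finset.mul_sum, mul_comm]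
        rw [this]
        exact Submodule.smul_mem _ _ (Submodule.mem_span_singleton_self v)
      · rw [Submodule.span_le, Set.singleton_subset_iff]
        refine ⟨fun k => if k = ⟨0, hn⟩ then 1 else 0, ?_⟩
        funext i
        simp [hC, Matrix.mulVecLin_apply, Matrix.mulVec, dotProduct]
    rw [Matrix.rank, hrange]
    exact finrank_span_singleton hvne
  refine ⟨C, hrankC, ?_, ?_⟩
  · -- matPerp A ⊆ matPerp C
    intro B hB
    have hB' : A.conjTranspose * B = 0 := hB
    show C.conjTranspose * B = 0
    funext i k
    have h := congrFun (congrFun hB' j0) k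
    simp only [Matrix.mul_apply, Matrix.conjTranspose_apply, Matrix.zero_apply] at h ⊢
    simpa [hC, hv] using h
  · -- matPerp C ≠ matPerp A
    intro h
    have hker : LinearMap.ker Cᴴ.mulVecLin = LinearMap.ker Aᴴ.mulVecLin := by
      ext w
      simp only [LinearMap.mem_ker, Matrix.mulVecLin_apply]
      rw [← constCol_mem_perp hn C w, ← constCol_mem_perp hn A w, h]
    have h1 : Aᴴ.rank + Module.finrank ℂ (LinearMap.ker Aᴴ.mulVecLin) = n := by
      simpa [Matrix.rank] using LinearMap.finrank_range_add_finrank_ker Aᴴ.mulVecLin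
    have h2 : Cᴴ.rank + Module.finrank ℂ (LinearMap.ker Cᴴ.mulVecLin) = n := by
      simpa [Matrix.rank] using LinearMap.finrank_range_add_finrank_ker Cᴴ.mulVecLin
    rw [hker] at h2
    have hAC : Aᴴ.rank = Cᴴ.rank := by omega
    rw [Matrix.rank_conjTranspose, Matrix.rank_conjTranspose] at hAC
    omega
end

section
/- Let A be a bounded operator on a complex Hilbert space, ε > 0, and a ∈ ℂ. Then A = aI if and only if σ_ε(A) = D(a, ε), the open disc of radius ε centered at a. -/
open scoped InnerProductSpace

/-- The ε-pseudo spectrum `σ_ε(A) = {z : ‖(zI - A)⁻¹‖ > ε⁻¹}`, where points `z`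
with `zI - A` not invertible are included. -/
noncomputable def pseudoSpectrum {H : Type*} [NormedAddCommGroup H]
    [InnerProductSpace ℂ H] [CompleteSpace H] (ε : ℝ) (A : H →L[ℂ] H) : Set ℂ :=
  {z | ¬ IsUnit (z • (1 : H →L[ℂ] H) - A) ∨
    ε⁻¹ < ‖Ring.inverse (z • (1 : H →L[ℂ] H) - A)‖}

private lemma ring_inverse_smul {R : Type*} [Ring R] [Algebra ℂ R] {c : ℂ} (hc : c ≠ 0)
    {T : R} (hT : IsUnit T) : Ring.inverse (c • T) = c⁻¹ • Ring.inverse T := by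
  obtain ⟨u, rfl⟩ := hT
  have h1 : (c • (u : R)) * (c⁻¹ • ((u⁻¹ : Rˣ) : R)) = 1 := by
    rw [smul_mul_smul_comm, mul_inv_cancel₀ hc, Units.mul_inv, one_smul]
  have h2 : (c⁻¹ • ((u⁻¹ : Rˣ) : R)) * (c • (u : R)) = 1 := by
    rw [smul_mul_smul_comm, inv_mul_cancel₀ hc, Units.inv_mul, one_smul]
  have : Ring.inverse ((⟨c • (u : R), c⁻¹ • ((u⁻¹ : Rˣ) : R), h1, h2⟩ : Rˣ) : R)
      = c⁻¹ • ((u⁻¹ : Rˣ) : R) := Ring.inverse_unit _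
  simpa [Ring.inverse_unit] using this

private lemma pseudo_forward {H : Type*} [NormedAddCommGroup H] [InnerProductSpace ℂ H]
    [CompleteSpace H] [Nontrivial H] (ε : ℝ) (hε : 0 < ε) (a : ℂ) :
    pseudoSpectrum ε (a • (1 : H →L[ℂ] H)) = Metric.ball a ε := by
  have hone : ‖(1 : H →L[ℂ] H)‖ = 1 := ContinuousLinearMap.norm_id
  ext z
  simp only [pseudoSpectrum, Set.mem_setOf_eq, Metric.mem_ball, dist_eq_norm]
  have key : z • (1 : H →L[ℂ] H) - a • 1 = (z - a) • 1 := by rw [sub_smul]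
  rw [key]
  rcases eq_or_ne z a with rfl | hza
  · simp only [sub_self, zero_smul]
    constructor
    · intro _; simpa using hε
    · intro _
      left
      rw [isUnit_zero_iff]
      intro h01
      obtain ⟨x, hx⟩ := exists_ne (0 : H)
      have : (0 : H →L[ℂ] H) x = (1 : H →L[ℂ] H) x := by rw [h01]
      simp at this
      exact hx this.symm
  · have hza' : z - a ≠ 0 := sub_ne_zero.mpr hza
    have hU : IsUnit ((z - a) • (1 : H →L[ℂ] H)) := by
      have := (isUnit_iff_ne_zero.mpr hza').map (algebraMap ℂ (H →L[ℂ] H))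
      rwa [Algebra.algebraMap_eq_smul_one] at this
    have hinv : Ring.inverse ((z - a) • (1 : H →L[ℂ] H)) = (z - a)⁻¹ • 1 := by
      rw [ring_inverse_smul hza' isUnit_one, Ring.inverse_one]
    have hnorm : ‖Ring.inverse ((z - a) • (1 : H →L[ℂ] H))‖ = ‖z - a‖⁻¹ := by
      rw [hinv, norm_smul, hone, mul_one, norm_inv]
    rw [hnorm]
    have habs : (0:ℝ) < ‖z - a‖ := norm_pos_iff.mpr hza'
    rw [inv_lt_inv₀ hε habs]
    constructor
    · rintro (h | h)
      · exact absurd hU h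
      · exact h
    · intro h
      right
      exact h

private lemma pseudo_backward {H : Type*} [NormedAddCommGroup H] [InnerProductSpace ℂ H]
    [CompleteSpace H] [Nontrivial H] (ε : ℝ) (hε : 0 < ε) (A : H →L[ℂ] H) (a : ℂ)
    (hball : pseudoSpectrum ε A = Metric.ball a ε) : A = a • (1 : H →L[ℂ] H) := by
  have halg : ∀ c : ℂ, algebraMap ℂ (H →L[ℂ] H) c = c • 1 :=
    fun c => Algebra.algebraMap_eq_smul_one c
  -- Step A: spectrum points push discs of radius ε into the pseudospectrum
  have stepA : ∀ lam ∈ spectrum ℂ A, ∀ z : ℂ, dist z lam < ε → z ∈ Metric.ball a ε := by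
    intro lam hlam z hz
    rw [← hball]
    by_cases hu : IsUnit (z • (1 : H →L[ℂ] H) - A)
    · refine Or.inr ?_
      by_contra hle
      push_neg at hle
      set R := Ring.inverse (z • (1 : H →L[ℂ] H) - A) with hR
      have hzl : z ≠ lam := by
        rintro rfl
        exact (spectrum.mem_iff.mp hlam) (by rwa [halg])
      have hlz : (0:ℝ) < ‖lam - z‖ := norm_pos_iff.mpr (sub_ne_zero.mpr (Ne.symm hzl))
      have hdist : ‖lam - z‖ < ε := by rwa [dist_eq_norm, ← norm_sub_rev] at hz
      have hlt : ‖(lam - z) • R‖ < 1 := by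
        rw [norm_smul]
        calc ‖lam - z‖ * ‖R‖ ≤ ‖lam - z‖ * ε⁻¹ := by gcongr
          _ < ε * ε⁻¹ := by gcongr
          _ = 1 := mul_inv_cancel₀ (ne_of_gt hε)
      have hunit2 : IsUnit (1 + (lam - z) • R) := by
        have h := (Units.oneSub (-((lam - z) • R)) (by rwa [norm_neg])).isUnit
        rwa [Units.val_oneSub, sub_neg_eq_add] at h
      have hkey : (z • (1 : H →L[ℂ] H) - A) * (1 + (lam - z) • R) = lam • 1 - A := by
        rw [mul_add, mul_one, mul_smul_comm, Ring.mul_inverse_cancel _ hu, sub_smul]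
        abel
      have : IsUnit (lam • (1 : H →L[ℂ] H) - A) := hkey ▸ hu.mul hunit2
      exact (spectrum.mem_iff.mp hlam) (by rwa [halg])
    · exact Or.inl hu
  -- Step B: spectrum = {a}
  have hsub : spectrum ℂ A ⊆ {a} := by
    intro lam hlam
    simp only [Set.mem_singleton_iff]
    by_contra hla
    set d := ‖lam - a‖ with hd
    have hd0 : 0 < d := norm_pos_iff.mpr (sub_ne_zero.mpr hla)
    have hlam_ball : lam ∈ Metric.ball a ε := stepA lam hlam lam (by simpa using hε)
    have hdε : d < ε := by rwa [Metric.mem_ball, dist_eq_norm] at hlam_ball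
    set z : ℂ := a + ((ε / d : ℝ) : ℂ) * (lam - a) with hzdef
    have hz_a : dist z a = ε := by
      rw [dist_eq_norm]
      have : z - a = ((ε / d : ℝ) : ℂ) * (lam - a) := by rw [hzdef]; ring
      rw [this, norm_mul, Complex.norm_real, Real.norm_eq_abs,
        abs_of_pos (div_pos hε hd0), ← hd, div_mul_cancel₀ _ (ne_of_gt hd0)]
    have hz_lam : dist z lam < ε := by
      rw [dist_eq_norm]
      have : z - lam = (((ε / d - 1 : ℝ)) : ℂ) * (lam - a) := by
        rw [hzdef]; push_cast; ring
      rw [this, norm_mul, Complex.norm_real, Real.norm_eq_abs,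
        abs_of_nonneg (by rw [sub_nonneg]; exact (one_le_div hd0).mpr hdε.le), ← hd,
        sub_mul, one_mul, div_mul_cancel₀ _ (ne_of_gt hd0)]
      linarith
    have := stepA lam hlam z hz_lam
    rw [Metric.mem_ball, hz_a] at this
    exact lt_irrefl _ this
  have hspec : ∀ c : ℂ, c ≠ a → IsUnit (c • (1 : H →L[ℂ] H) - A) := by
    intro c hc
    have hc' : c ∉ spectrum ℂ A := fun h => hc (hsub h)
    rw [spectrum.notMem_iff, halg] at hc'
    exact hc'
  set N : H →L[ℂ] H := A - a • 1 with hN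
  -- key scalar identity
  have key : ∀ z : ℂ, z ≠ 0 →
      (z⁻¹ + a) • (1 : H →L[ℂ] H) - A = z⁻¹ • (1 - z • N) := by
    intro z hz
    rw [hN]
    match_scalars <;> field_simp <;> ring
  have h1 : ∀ z : ℂ, IsUnit (1 - z • N) := by
    intro z
    rcases eq_or_ne z 0 with rfl | hz
    · simpa using isUnit_one
    · have hc : z⁻¹ + a ≠ a := by simp [inv_ne_zero hz]
      have hu : IsUnit (z • ((z⁻¹ + a) • (1 : H →L[ℂ] H) - A)) := by
        rw [Algebra.smul_def]
        exact (IsUnit.map (algebraMap ℂ (H →L[ℂ] H)) (isUnit_iff_ne_zero.mpr hz)).mul (hspec _ hc)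
      rwa [key z hz, smul_smul, mul_inv_cancel₀ hz, one_smul] at hu
  -- norm bound on the sphere of radius ε⁻¹
  have hbound : ∀ z : ℂ, ‖z‖ = ε⁻¹ → ‖Ring.inverse (1 - z • N)‖ ≤ 1 := by
    intro z hznorm
    have hz : z ≠ 0 := by
      intro h; rw [h, norm_zero] at hznorm; exact (ne_of_gt (inv_pos.mpr hε)) hznorm.symm
    have hw : (z⁻¹ + a) ∉ Metric.ball a ε := by
      rw [Metric.mem_ball, dist_eq_norm, add_sub_cancel_right, norm_inv, hznorm, inv_inv]
      exact not_lt_of_ge le_rfl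
    rw [← hball] at hw
    simp only [pseudoSpectrum, Set.mem_setOf_eq, not_or, not_lt] at hw
    obtain ⟨-, hw2⟩ := hw
    have hinv : Ring.inverse ((z⁻¹ + a) • (1 : H →L[ℂ] H) - A)
        = z • Ring.inverse (1 - z • N) := by
      rw [key z hz, ring_inverse_smul (inv_ne_zero hz) (h1 z), inv_inv]
    rw [hinv, norm_smul, hznorm] at hw2
    calc ‖Ring.inverse (1 - z • N)‖
        = ε * (ε⁻¹ * ‖Ring.inverse (1 - z • N)‖) := by
          rw [← mul_assoc, mul_inv_cancel₀ (ne_of_gt hε), one_mul]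
      _ ≤ ε * ε⁻¹ := by gcongr
      _ = 1 := mul_inv_cancel₀ (ne_of_gt hε)
  -- now fix x and run maximum modulus
  have hxN : ∀ x : H, ⟪x, N x⟫_ℂ = 0 := by
    intro x
    set F : ℂ → ℂ := fun z => ⟪x, (Ring.inverse (1 - z • N)) x⟫_ℂ with hF
    have hinvdiff : Differentiable ℂ (fun z : ℂ => Ring.inverse (1 - z • N)) := by
      intro z
      have hd : DifferentiableAt ℂ (fun z : ℂ => 1 - z • N) z :=
        ((differentiable_const (1 : H →L[ℂ] H)).sub (differentiable_id.smul_const N)) z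
      exact (differentiableAt_inverse (𝕜 := ℂ) (h1 z)).comp z hd
    have hFdiff : Differentiable ℂ F := by
      have L : (H →L[ℂ] H) →L[ℂ] ℂ :=
        (innerSL ℂ x).comp (ContinuousLinearMap.apply ℂ H x)
      exact (ContinuousLinearMap.differentiable
        ((innerSL ℂ x).comp (ContinuousLinearMap.apply ℂ H x))).comp hinvdiff
    have hF0 : F 0 = ⟪x, x⟫_ℂ := by
      simp [hF]
    have hF0norm : ‖F 0‖ = ‖x‖ ^ 2 := by
      rw [hF0, inner_self_eq_norm_sq_to_K]
      simp [Complex.norm_real]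
    have hεinv : (0:ℝ) < ε⁻¹ := inv_pos.mpr hε
    have hfront : ∀ z ∈ frontier (Metric.ball (0:ℂ) ε⁻¹), ‖F z‖ ≤ ‖x‖ ^ 2 := by
      intro z hzf
      rw [frontier_ball _ (ne_of_gt hεinv)] at hzf
      have hzn : ‖z‖ = ε⁻¹ := by rwa [Metric.mem_sphere, dist_zero_right] at hzf
      calc ‖F z‖ ≤ ‖x‖ * ‖(Ring.inverse (1 - z • N)) x‖ := norm_inner_le_norm _ _
        _ ≤ ‖x‖ * (‖Ring.inverse (1 - z • N)‖ * ‖x‖) := by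
            gcongr; exact ContinuousLinearMap.le_opNorm _ _
        _ ≤ ‖x‖ * (1 * ‖x‖) := by gcongr; exact hbound z hzn
        _ = ‖x‖ ^ 2 := by ring
    have hmax : IsMaxOn (norm ∘ F) (Metric.ball (0:ℂ) ε⁻¹) 0 := by
      intro z hz
      simp only [Function.comp_apply, Set.mem_setOf_eq, hF0norm]
      exact Complex.norm_le_of_forall_mem_frontier_norm_le Metric.isBounded_ball
        hFdiff.diffContOnCl hfront (subset_closure hz)
    have heq : Set.EqOn F (Function.const ℂ (F 0)) (Metric.closedBall (0:ℂ) ε⁻¹) :=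
      Complex.eqOn_closedBall_of_isMaxOn_norm hFdiff.diffContOnCl hmax
    -- the auxiliary function G
    set G : ℂ → ℂ := fun z => ⟪x, (Ring.inverse (1 - z • N)) (N x)⟫_ℂ with hG
    have hGzero : ∀ z : ℂ, z ∈ Metric.ball (0:ℂ) ε⁻¹ → z ≠ 0 → G z = 0 := by
      intro z hzball hz
      have hFz : F z = F 0 := heq (Metric.ball_subset_closedBall hzball)
      have hid : Ring.inverse (1 - z • N) - 1 = z • (Ring.inverse (1 - z • N) * N) := by
        have hcancel : Ring.inverse (1 - z • N) * (1 - z • N) = 1 :=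
          Ring.inverse_mul_cancel _ (h1 z)
        calc Ring.inverse (1 - z • N) - 1
            = Ring.inverse (1 - z • N) - Ring.inverse (1 - z • N) * (1 - z • N) := by
              rw [hcancel]
          _ = Ring.inverse (1 - z • N) * (z • N) := by rw [mul_sub, mul_one]; abel
          _ = z • (Ring.inverse (1 - z • N) * N) := (mul_smul_comm _ _ _)
      have hdiffF : F z - F 0 = z * G z := by
        rw [hF0]
        have : F z - ⟪x, x⟫_ℂ = ⟪x, ((Ring.inverse (1 - z • N) - 1) x)⟫_ℂ := by
          simp only [hF, ContinuousLinearMap.sub_apply, ContinuousLinearMap.one_apply,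
            inner_sub_right]
        rw [this, hid]
        simp only [ContinuousLinearMap.smul_apply, ContinuousLinearMap.mul_apply,
          inner_smul_right, hG]
      rw [hFz, sub_self] at hdiffF
      exact (mul_eq_zero.mp hdiffF.symm).resolve_left hz
    have hGcont : ContinuousAt G 0 := by
      have : Differentiable ℂ G :=
        (ContinuousLinearMap.differentiable
          ((innerSL ℂ x).comp (ContinuousLinearMap.apply ℂ H (N x)))).comp hinvdiff
      exact this.continuous.continuousAt
    have hG0 : G 0 = ⟪x, N x⟫_ℂ := by simp [hG]
    have ht1 : Filter.Tendsto G (nhdsWithin (0:ℂ) {(0:ℂ)}ᶜ) (nhds (G 0)) :=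
      hGcont.continuousWithinAt
    have ht2 : Filter.Tendsto G (nhdsWithin (0:ℂ) {(0:ℂ)}ᶜ) (nhds 0) := by
      have hmem : Metric.ball (0:ℂ) ε⁻¹ ∈ nhdsWithin (0:ℂ) {(0:ℂ)}ᶜ :=
        nhdsWithin_le_nhds (Metric.ball_mem_nhds _ hεinv)
      refine Filter.Tendsto.congr' ?_ tendsto_const_nhds
      filter_upwards [hmem, self_mem_nhdsWithin] with z hz1 hz2
      exact (hGzero z hz1 hz2).symm
    rw [← hG0]
    exact tendsto_nhds_unique ht1 ht2
  -- conclude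
  have hNzero : N = 0 := by
    have h' : ∀ y : H, ⟪(N : H →ₗ[ℂ] H) y, y⟫_ℂ = 0 := by
      intro y
      have := hxN y
      rw [← inner_conj_symm] at this
      simpa using congrArg (starRingEnd ℂ) this
    have := (inner_map_self_eq_zero (N : H →ₗ[ℂ] H)).mp h'
    ext y
    exact congrFun (congrArg DFunLike.coe this) y
  rw [hN] at hNzero
  rw [sub_eq_zero] at hNzero
  exact hNzero

theorem stmt_10 {H : Type*} [NormedAddCommGroup H] [InnerProductSpace ℂ H]
    [CompleteSpace H] [Nontrivial H] (ε : ℝ) (hε : 0 < ε) (A : H →L[ℂ] H) (a : ℂ) :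
    A = a • (1 : H →L[ℂ] H) ↔ pseudoSpectrum ε A = Metric.ball a ε := by
  constructor
  · rintro rfl
    exact pseudo_forward ε hε a
  · exact pseudo_backward ε hε A a
end

section
/- Let H be a complex Hilbert space with dim H ≥ 2, and for each x ∈ H let V_x be a unitary operator on H. Suppose that for all x, y ∈ H with ⟨x, y⟩ ≠ 0 and all unit vectors f, g ∈ H: ⟨f, g⟩ = 0 implies ⟨V_x f, V_y g⟩ = 0. Then for all x, y with ⟨x, y⟩ ≠ 0, the operator V_x* V_y is a scalar multiple of the identity. -/
open scoped InnerProductSpace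

theorem stmt_17 {H : Type*} [NormedAddCommGroup H] [InnerProductSpace ℂ H]
    [CompleteSpace H] (hdim : 2 ≤ Module.rank ℂ H)
    (V : H → (H →L[ℂ] H))
    (hunitary : ∀ x : H, ContinuousLinearMap.adjoint (V x) * V x = 1 ∧
      V x * ContinuousLinearMap.adjoint (V x) = 1)
    (horth : ∀ x y : H, ⟪x, y⟫_ℂ ≠ 0 → ∀ f g : H, ‖f‖ = 1 → ‖g‖ = 1 →
      ⟪f, g⟫_ℂ = 0 → ⟪V x f, V y g⟫_ℂ = 0) :
    ∀ x y : H, ⟪x, y⟫_ℂ ≠ 0 →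
      ∃ c : ℂ, ContinuousLinearMap.adjoint (V x) * V y = c • (1 : H →L[ℂ] H) := by
  intro x y hxy
  set U : H →L[ℂ] H := ContinuousLinearMap.adjoint (V x) * V y with hU
  -- Step 1: every vector is sent into its own span
  have key : ∀ g : H, ∃ c : ℂ, U g = c • g := by
    intro g
    rcases eq_or_ne g 0 with rfl | hg
    · exact ⟨0, by simp⟩
    · have hgnorm : ‖g‖ ≠ 0 := norm_ne_zero_iff.mpr hg
      set g' : H := (‖g‖⁻¹ : ℂ) • g with hg'
      have hg'norm : ‖g'‖ = 1 := by
        rw [hg', norm_smul]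
        simp [hgnorm]
      have hgg' : g = (‖g‖ : ℂ) • g' := by
        rw [hg', smul_smul]
        norm_cast
        rw [mul_inv_cancel₀ hgnorm, one_smul]
      -- U g' is orthogonal to everything orthogonal to g'
      have horthg : ∀ f : H, ⟪f, g'⟫_ℂ = 0 → ⟪f, U g'⟫_ℂ = 0 := by
        intro f hf
        rcases eq_or_ne f 0 with rfl | hfne
        · simp
        · have hfnorm : ‖f‖ ≠ 0 := norm_ne_zero_iff.mpr hfne
          have hf' : ‖((‖f‖⁻¹ : ℂ) • f : H)‖ = 1 := by
            rw [norm_smul]; simp [hfnorm]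
          have hinner : ⟪((‖f‖⁻¹ : ℂ) • f : H), g'⟫_ℂ = 0 := by
            rw [inner_smul_left, hf, mul_zero]
          have h1 := horth x y hxy _ g' hf' hg'norm hinner
          rw [map_smul, inner_smul_left] at h1
          have h2 : ⟪V x f, V y g'⟫_ℂ = 0 := by
            rcases mul_eq_zero.mp h1 with h | h
            · exfalso
              apply hfnorm
              have := (map_eq_zero (starRingEnd ℂ)).mp h
              exact_mod_cast inv_eq_zero.mp (by exact_mod_cast this)
            · exact h
          calc ⟪f, U g'⟫_ℂ = ⟪f, ContinuousLinearMap.adjoint (V x) (V y g')⟫_ℂ := by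
                simp [hU, ContinuousLinearMap.mul_apply]
            _ = ⟪V x f, V y g'⟫_ℂ := ContinuousLinearMap.adjoint_inner_right _ _ _
            _ = 0 := h2
      -- hence U g' ∈ span {g'}
      have hmem : U g' ∈ (ℂ ∙ g')ᗮᗮ := by
        rw [Submodule.mem_orthogonal]
        intro f hfmem
        exact horthg f (Submodule.inner_left_of_mem_orthogonal
          (Submodule.mem_span_singleton_self g') hfmem)
      rw [Submodule.orthogonal_orthogonal] at hmem
      obtain ⟨c, hc⟩ := Submodule.mem_span_singleton.mp hmem
      refine ⟨c, ?_⟩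
      calc U g = (‖g‖ : ℂ) • U g' := by rw [← map_smul, ← hgg']
        _ = (‖g‖ : ℂ) • (c • g') := by rw [hc]
        _ = c • ((‖g‖ : ℂ) • g') := smul_comm _ _ _
        _ = c • g := by rw [← hgg']
  -- Step 2: the scalar is uniform
  have hnt : Nontrivial H := by
    rcases subsingleton_or_nontrivial H with h | h
    · exfalso
      have h0 : Module.rank ℂ H = 0 := rank_subsingleton' ℂ H
      rw [h0] at hdim
      exact absurd hdim (by norm_num)
    · exact h
  obtain ⟨v, hvne⟩ := exists_ne (0 : H)
  obtain ⟨c, hcv⟩ := key v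
  refine ⟨c, ?_⟩
  ext g
  simp only [ContinuousLinearMap.smul_apply, ContinuousLinearMap.one_apply]
  rcases eq_or_ne g 0 with rfl | hg
  · simp
  obtain ⟨a, ha⟩ := key g
  by_cases hspan : ∃ t : ℂ, g = t • v
  · obtain ⟨t, rfl⟩ := hspan
    rw [map_smul, hcv, smul_smul, smul_smul, mul_comm]
  · obtain ⟨b, hb⟩ := key (g + v)
    rw [map_add, ha, hcv] at hb
    have heq : (b - a) • g = (c - b) • v := by
      linear_combination (norm := module) -hb
    have hba : b = a := by
      by_contra hba
      apply hspan
      refine ⟨(b - a)⁻¹ * (c - b), ?_⟩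
      rw [mul_smul, ← heq, smul_smul, inv_mul_cancel₀ (sub_ne_zero.mpr hba), one_smul]
    have h0 : (c - b) • v = 0 := by
      rw [← heq, hba, sub_self, zero_smul]
    have hcb : c = b := by
      rcases smul_eq_zero.mp h0 with h | h
      · exact sub_eq_zero.mp h
      · exact absurd h hvne
    rw [ha, hcb, hba]
end
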